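/- There exists $\mu_d < \infty$, depending only on $d$, such that for every $\mu > \mu_d$: if $(N(x))_{x \in \mathbb{Z}^d}$ are independent Poisson($\mu$) random variables, then $\sum_{C} P\big\{\sum_{x \in C} N(x) < \tfrac{1}{2}\mu |C|\big\} < \infty$, where the sum runs over all finite connected subsets $C$ of $\mathbb{Z}^d$ containing the origin. -/

import Mathlib

open MeasureTheory ProbabilityTheory
open scoped ENNReal NNReal

/-- Two points of `ℤ^d` are nearest-neighbor adjacent if they are at `ℓ^1` distance 1. -/
def NNAdj {d : ℕ} (v w : Fin d → ℤ) : Prop := (∑ i, |v i - w i|) = 1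

/-- A set `A` is connected for the adjacency relation `adj`. -/
def ConnectedIn {α : Type*} (adj : α → α → Prop) (A : Set α) : Prop :=
  ∀ x ∈ A, ∀ y ∈ A, Relation.ReflTransGen (fun a b => a ∈ A ∧ b ∈ A ∧ adj a b) x y

namespace PoissonDev

lemma nnadj_symm {d : ℕ} {v w : Fin d → ℤ} (h : NNAdj v w) : NNAdj w v := by
  unfold NNAdj at *
  simpa [abs_sub_comm] using h

/-! ### Combinatorial part -/

section Comb

variable {α : Type*} [DecidableEq α]

/-- Chain decomposition from the end. -/
lemma chain_decomp {r : α → α → Prop} :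
    ∀ (l : List α) (a : α), l ≠ [] → List.Chain r a l →
      ∃ c l', List.Chain r a l' ∧
        (a :: l').getLast (List.cons_ne_nil _ _) = c ∧
        r c ((a :: l).getLast (List.cons_ne_nil _ _)) ∧ l'.length + 1 = l.length := by
  intro l
  induction l with
  | nil => intro a h; exact absurd rfl h
  | cons x t ih =>
    intro a _ hchain
    replace hchain := List.chain_cons.mp hchain
    cases t with
    | nil =>
      refine ⟨a, [], List.Chain.nil, rfl, ?_, rfl⟩
      simpa using hchain.1
    | cons y t' =>
      obtain ⟨c, l', hc, hl, hr, hlen⟩ := ih x (List.cons_ne_nil _ _) hchain.2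
      refine ⟨c, x :: l', List.Chain.cons hchain.1 hc, ?_, ?_, by simpa using hlen⟩
      · rw [List.getLast_cons_cons]; exact hl
      · rw [List.getLast_cons_cons]; exact hr

/-- Elements of a chain whose relation carries membership. -/
lemma chain_mem {C : Finset α} {adj : α → α → Prop} :
    ∀ (l : List α) (a : α),
      List.Chain (fun u v => u ∈ (C : Set α) ∧ v ∈ (C : Set α) ∧ adj u v) a l →
      ∀ b ∈ l, b ∈ C := by
  intro l
  induction l with
  | nil => intro a _ b hb; simp at hb
  | cons x t ih =>
    intro a hchain b hb
    replace hchain := List.chain_cons.mp hchain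
    rcases List.mem_cons.mp hb with h | h
    · subst h; exact hchain.1.2.1
    · exact ih x hchain.2 b h

/-- Insertion of a pendant vertex into a chain. -/
lemma chain_insert {r : α → α → Prop} {w v : α} (hwv : r w v) (hvw : r v w) :
    ∀ (l : List α) (a : α), List.Chain r a l → w ∈ a :: l →
      ∃ l', List.Chain r a l' ∧ l'.length = l.length + 2 ∧
        (a :: l').toFinset = insert v ((a :: l).toFinset) := by
  intro l
  induction l with
  | nil =>
    intro a _ hw
    have ha : w = a := by simpa using hw
    subst ha
    refine ⟨[v, w], ?_, rfl, ?_⟩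
    · exact List.Chain.cons hwv (List.Chain.cons hvw List.Chain.nil)
    · ext z; simp; try tauto
  | cons b t ih =>
    intro a hchain hw
    by_cases haw : w = a
    · subst haw
      refine ⟨v :: w :: b :: t, ?_, rfl, ?_⟩
      · exact List.Chain.cons hwv (List.Chain.cons hvw hchain)
      · ext z; simp; try tauto
    · have hw' : w ∈ b :: t := by
        rcases List.mem_cons.mp hw with h | h
        · exact absurd h haw
        · exact h
      replace hchain := List.chain_cons.mp hchain
      obtain ⟨t', hc, hlen, hfin⟩ := ih b hchain.2 hw'
      refine ⟨b :: t', List.Chain.cons hchain.1 hc, by simpa using hlen, ?_⟩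
      have : (b :: t').toFinset = insert v ((b :: t).toFinset) := hfin
      simp only [List.toFinset_cons] at this ⊢
      rw [this, Finset.insert_comm]

end Comb

section Lattice

variable {d : ℕ}

/-- A non-cut vertex distinct from the origin, with a neighbor. -/

lemma exists_noncut (C : Finset (Fin d → ℤ)) (h0 : (0 : Fin d → ℤ) ∈ C)
    (hconn : ConnectedIn NNAdj (C : Set (Fin d → ℤ))) (hcard : 2 ≤ C.card) :
    ∃ v ∈ C, v ≠ 0 ∧ ConnectedIn NNAdj ((C.erase v : Finset (Fin d → ℤ)) : Set (Fin d → ℤ)) ∧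
      ∃ w ∈ C.erase v, NNAdj w v := by
  classical
  set r : (Fin d → ℤ) → (Fin d → ℤ) → Prop :=
    fun a b => a ∈ (C : Set (Fin d → ℤ)) ∧ b ∈ (C : Set (Fin d → ℤ)) ∧ NNAdj a b with hr
  have hex : ∀ x, x ∈ C → ∃ n, ∃ l : List (Fin d → ℤ), l.length = n ∧ List.Chain r 0 l ∧
      ((0 : Fin d → ℤ) :: l).getLast (List.cons_ne_nil _ _) = x := by
    intro x hx
    obtain ⟨l, hc, hl⟩ := List.exists_isChain_cons_of_relationReflTransGen
      (hconn 0 (Finset.mem_coe.mpr h0) x (Finset.mem_coe.mpr hx))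
    exact ⟨l.length, l, rfl, hc, hl⟩
  let D : (Fin d → ℤ) → ℕ := fun x => if hx : x ∈ C then Nat.find (hex x hx) else 0
  have hDspec : ∀ x, x ∈ C → ∃ l : List (Fin d → ℤ), l.length = D x ∧ List.Chain r 0 l ∧
      ((0 : Fin d → ℤ) :: l).getLast (List.cons_ne_nil _ _) = x := by
    intro x hx
    simpa only [D, dif_pos hx] using Nat.find_spec (hex x hx)
  have hDle : ∀ x, x ∈ C → ∀ l : List (Fin d → ℤ), List.Chain r 0 l →
      ((0 : Fin d → ℤ) :: l).getLast (List.cons_ne_nil _ _) = x → D x ≤ l.length := by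
    intro x hx l hc hl
    simp only [D, dif_pos hx]
    exact Nat.find_le ⟨l, rfl, hc, hl⟩
  obtain ⟨v, hv, hvmax⟩ := C.exists_max_image D ⟨0, h0⟩
  obtain ⟨u, hu, hune⟩ := Finset.exists_mem_ne (s := C) (by omega) 0
  have hDu : 1 ≤ D u := by
    rcases Nat.eq_zero_or_pos (D u) with h | h
    · obtain ⟨l, hlen, hc, hl⟩ := hDspec u hu
      rw [h] at hlen
      have hnil : l = [] := List.length_eq_zero_iff.mp hlen
      subst hnil
      rw [List.getLast_singleton] at hl
      exact absurd hl.symm hune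
    · exact h
  have hDv : 1 ≤ D v := le_trans hDu (hvmax u hu)
  have hv0 : v ≠ 0 := by
    intro h
    subst h
    have : D 0 = 0 := Nat.le_zero.mp (hDle 0 h0 ([] : List (Fin d → ℤ)) List.Chain.nil rfl)
    omega
  -- reachability within the erased set
  set rE : (Fin d → ℤ) → (Fin d → ℤ) → Prop := fun a b =>
    a ∈ ((C.erase v : Finset (Fin d → ℤ)) : Set (Fin d → ℤ)) ∧
    b ∈ ((C.erase v : Finset (Fin d → ℤ)) : Set (Fin d → ℤ)) ∧ NNAdj a b with hrE
  have key : ∀ n, ∀ x, x ∈ C → x ≠ v → D x ≤ n → Relation.ReflTransGen rE 0 x := by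
    intro n
    induction n with
    | zero =>
      intro x hx hxv hD
      obtain ⟨l, hlen, hc, hl⟩ := hDspec x hx
      have hnil : l = [] := List.length_eq_zero_iff.mp (by omega)
      subst hnil
      rw [List.getLast_singleton] at hl
      subst hl
      exact Relation.ReflTransGen.refl
    | succ n ih =>
      intro x hx hxv hD
      obtain ⟨l, hlen, hc, hl⟩ := hDspec x hx
      rcases eq_or_ne l ([] : List (Fin d → ℤ)) with hnil | hne
      · subst hnil
        rw [List.getLast_singleton] at hl
        subst hl
        exact Relation.ReflTransGen.refl
      · obtain ⟨c, l', hc', hl', hrel, hlen'⟩ := chain_decomp l 0 hne hc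
        rw [hl] at hrel
        have hcC : c ∈ C := hrel.1
        have hDc : D c ≤ l'.length := hDle c hcC l' hc' hl'
        have hlt : D c < D x := by omega
        have hcv : c ≠ v := by
          intro h
          subst h
          exact absurd (lt_of_lt_of_le hlt (hvmax x hx)) (lt_irrefl _)
        have hreach := ih c hcC hcv (by omega)
        refine hreach.tail ?_
        exact ⟨Finset.mem_coe.mpr (Finset.mem_erase.mpr ⟨hcv, hcC⟩),
          Finset.mem_coe.mpr (Finset.mem_erase.mpr ⟨hxv, hx⟩), hrel.2.2⟩
  have hsymm : Symmetric rE := by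
    intro a b hab
    exact ⟨hab.2.1, hab.1, nnadj_symm hab.2.2⟩
  refine ⟨v, hv, hv0, ?_, ?_⟩
  · intro x hx y hy
    have hx' := Finset.mem_erase.mp (Finset.mem_coe.mp hx)
    have hy' := Finset.mem_erase.mp (Finset.mem_coe.mp hy)
    have t1 : Relation.ReflTransGen rE 0 x := key (D x) x hx'.2 hx'.1 le_rfl
    have t2 : Relation.ReflTransGen rE 0 y := key (D y) y hy'.2 hy'.1 le_rfl
    exact Relation.ReflTransGen.trans ((@Relation.ReflTransGen.symmetric _ rE ⟨fun _ _ h => hsymm h⟩).symm _ _ t1) t2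
  · obtain ⟨l, hlen, hc, hl⟩ := hDspec v hv
    have hne : l ≠ ([] : List (Fin d → ℤ)) := by
      intro h
      subst h
      simp at hlen
      omega
    obtain ⟨c, l', hc', hl', hrel, hlen'⟩ := chain_decomp l 0 hne hc
    rw [hl] at hrel
    have hcC : c ∈ C := hrel.1
    have hDc : D c ≤ l'.length := hDle c hcC l' hc' hl'
    have hlt : D c < D v := by omega
    have hcv : c ≠ v := by
      intro h; subst h; exact absurd hlt (lt_irrefl _)
    exact ⟨c, Finset.mem_erase.mpr ⟨hcv, hcC⟩, hrel.2.2⟩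

/-- Every finite connected set containing the origin has a covering walk of
linear length. -/
lemma exists_walk (C : Finset (Fin d → ℤ)) (h0 : (0 : Fin d → ℤ) ∈ C)
    (hconn : ConnectedIn NNAdj (C : Set (Fin d → ℤ))) :
    ∃ l : List (Fin d → ℤ), List.Chain NNAdj 0 l ∧ ((0 : Fin d → ℤ) :: l).toFinset = C ∧
      l.length ≤ 2 * (C.card - 1) := by
  classical
  induction C using Finset.strongInduction with
  | _ C ih =>
    by_cases hcard : 2 ≤ C.card
    · obtain ⟨v, hvC, hv0, hconn', w, hw, hadj⟩ := exists_noncut C h0 hconn hcard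
      have h0' : (0 : Fin d → ℤ) ∈ C.erase v :=
        Finset.mem_erase.mpr ⟨fun h => hv0 h.symm, h0⟩
      obtain ⟨l, hc, hfin, hlen⟩ := ih (C.erase v) (Finset.erase_ssubset hvC) h0' hconn'
      have hwmem : w ∈ ((0 : Fin d → ℤ) :: l) := by
        rw [← List.mem_toFinset, hfin]; exact hw
      obtain ⟨l', hc', hlen', hfin'⟩ := chain_insert hadj (nnadj_symm hadj) l 0 hc hwmem
      refine ⟨l', hc', ?_, ?_⟩
      · rw [hfin', hfin, Finset.insert_erase hvC]
      · have hce : (C.erase v).card = C.card - 1 := Finset.card_erase_of_mem hvC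
        omega
    · have hC : C = {0} := by
        apply Finset.eq_singleton_iff_unique_mem.mpr
        refine ⟨h0, fun x hx => ?_⟩
        by_contra hne
        have := Finset.one_lt_card.mpr ⟨x, hx, 0, h0, hne⟩
        omega
      subst hC
      exact ⟨[], List.Chain.nil, by simp, by simp⟩

/-- The finite set of unit steps. -/
noncomputable def steps (d : ℕ) : Finset (Fin d → ℤ) :=
  (Finset.Icc (fun _ => (-1 : ℤ)) (fun _ => (1 : ℤ))).filter (fun u => (∑ i, |u i|) = 1)

lemma sub_mem_steps {a b : Fin d → ℤ} (h : NNAdj a b) : b - a ∈ steps d := by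
  unfold NNAdj at h
  have hsum : (∑ i, |b i - a i|) = 1 := by
    rw [← h]; exact Finset.sum_congr rfl fun i _ => abs_sub_comm _ _
  rw [steps, Finset.mem_filter]
  constructor
  · rw [Finset.mem_Icc]
    constructor <;> intro i <;>
    · have h1 : |b i - a i| ≤ 1 := by
        rw [← hsum]
        exact Finset.single_le_sum (f := fun j => |b j - a j|) (fun j _ => abs_nonneg _) (Finset.mem_univ i)
      have := abs_le.mp h1
      simp only [Pi.sub_apply]
      omega
  · simpa using hsum

/-- Successive differences of a list. -/
def diffs : (Fin d → ℤ) → List (Fin d → ℤ) → List (Fin d → ℤ)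
  | _, [] => []
  | a, b :: t => (b - a) :: diffs b t

lemma diffs_length (a : Fin d → ℤ) (l : List (Fin d → ℤ)) : (diffs a l).length = l.length := by
  induction l generalizing a with
  | nil => rfl
  | cons b t ih => simp [diffs, ih]

lemma diffs_inj : ∀ (l₁ l₂ : List (Fin d → ℤ)) (a : Fin d → ℤ),
    diffs a l₁ = diffs a l₂ → l₁ = l₂ := by
  intro l₁
  induction l₁ with
  | nil => intro l₂ a h; cases l₂ <;> simp_all [diffs]
  | cons b t ih =>
    intro l₂ a h
    cases l₂ with
    | nil => simp [diffs] at h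
    | cons b' t' =>
      simp only [diffs, List.cons.injEq] at h
      have hb : b = b' := by
        have := h.1
        have : b - a + a = b' - a + a := by rw [this]
        simpa using this
      subst hb
      exact congrArg (b :: ·) (ih t' b h.2)

lemma diffs_mem_steps : ∀ (l : List (Fin d → ℤ)) (a : Fin d → ℤ), List.Chain NNAdj a l →
    ∀ s ∈ diffs a l, s ∈ steps d := by
  intro l
  induction l with
  | nil => intro a _ s hs; simp [diffs] at hs
  | cons b t ih =>
    intro a hc s hs
    replace hc := List.chain_cons.mp hc
    rcases List.mem_cons.mp hs with h | h
    · subst h; exact sub_mem_steps hc.1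
    · exact ih b hc.2 s h


/-- Encode an optional step into the step alphabet. -/
noncomputable def encOpt (d : ℕ) (s : Option (Fin d → ℤ)) : Option ↥(steps d) :=
  s.bind (fun u => if h : u ∈ steps d then some ⟨u, h⟩ else none)

lemma encOpt_map {d : ℕ} (s : Option (Fin d → ℤ))
    (h : ∀ u, s = some u → u ∈ steps d) :
    Option.map Subtype.val (encOpt d s) = s := by
  cases s with
  | none => rfl
  | some u => simp [encOpt, dif_pos (h u rfl)]

/-- The type of connected finite subsets of `ℤ^d` containing the origin. -/
abbrev ConnSet (d : ℕ) := {C : Finset (Fin d → ℤ) //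
    (0 : Fin d → ℤ) ∈ C ∧ ConnectedIn NNAdj (C : Set (Fin d → ℤ))}

/-- Injection of the size-`n` fiber into step sequences. -/
lemma fiber_embeds (d n : ℕ) :
    ∃ enc : {C : ConnSet d // C.1.card = n} → (Fin (2 * n) → Option ↥(steps d)),
      Function.Injective enc := by
  classical
  have hwalk : ∀ C : {C : ConnSet d // C.1.card = n},
      ∃ l : List (Fin d → ℤ), List.Chain NNAdj 0 l ∧
        ((0 : Fin d → ℤ) :: l).toFinset = C.1.1 ∧ l.length ≤ 2 * (C.1.1.card - 1) :=
    fun C => exists_walk C.1.1 C.1.2.1 C.1.2.2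
  choose L hL1 hL2 hL3 using hwalk
  refine ⟨fun C i => encOpt d ((diffs 0 (L C))[(i : ℕ)]?), ?_⟩
  intro C₁ C₂ h
  have key : ∀ i : ℕ, (diffs 0 (L C₁))[i]? = (diffs 0 (L C₂))[i]? := by
    intro i
    by_cases hi : i < 2 * n
    · have h1 := congrFun h ⟨i, hi⟩
      have e1 : Option.map Subtype.val (encOpt d ((diffs 0 (L C₁))[i]?)) =
          (diffs 0 (L C₁))[i]? := by
        refine encOpt_map _ (fun u hu => ?_)
        obtain ⟨hi', rfl⟩ := List.getElem?_eq_some_iff.mp hu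
        exact diffs_mem_steps _ _ (hL1 C₁) _ (List.getElem_mem hi')
      have e2 : Option.map Subtype.val (encOpt d ((diffs 0 (L C₂))[i]?)) =
          (diffs 0 (L C₂))[i]? := by
        refine encOpt_map _ (fun u hu => ?_)
        obtain ⟨hi', rfl⟩ := List.getElem?_eq_some_iff.mp hu
        exact diffs_mem_steps _ _ (hL1 C₂) _ (List.getElem_mem hi')
      rw [← e1, ← e2]
      exact congrArg (Option.map Subtype.val) h1
    · have len : ∀ C : {C : ConnSet d // C.1.card = n},
          (diffs 0 (L C)).length ≤ i := by
        intro C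
        rw [diffs_length]
        have := hL3 C
        have hn := C.2
        omega
      rw [List.getElem?_eq_none (len C₁), List.getElem?_eq_none (len C₂)]
  have hLeq : L C₁ = L C₂ := diffs_inj _ _ 0 (List.ext_getElem? key)
  have : C₁.1.1 = C₂.1.1 := by rw [← hL2 C₁, ← hL2 C₂, hLeq]
  exact Subtype.ext (Subtype.ext this)

lemma fiber_finite (d n : ℕ) : Finite {C : ConnSet d // C.1.card = n} := by
  obtain ⟨enc, henc⟩ := fiber_embeds d n
  exact Finite.of_injective enc henc

lemma fiber_card_le (d n : ℕ) :
    Nat.card {C : ConnSet d // C.1.card = n} ≤ ((steps d).card + 1) ^ (2 * n) := by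
  obtain ⟨enc, henc⟩ := fiber_embeds d n
  calc Nat.card {C : ConnSet d // C.1.card = n}
      ≤ Nat.card (Fin (2 * n) → Option ↥(steps d)) :=
        Nat.card_le_card_of_injective enc henc
    _ = ((steps d).card + 1) ^ (2 * n) := by
        simp [Nat.card_eq_fintype_card, Fintype.card_fun]

/-! ### Probability part -/

section Prob

variable {Ω : Type} [MeasurableSpace Ω] {P : Measure Ω} [IsProbabilityMeasure P]

lemma integrable_exp_neg {X : Ω → ℝ} (hX : Measurable X) (hX0 : ∀ ω, 0 ≤ X ω) :
    Integrable (fun ω => Real.exp (-1 * X ω)) P := by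
  refine Integrable.mono' (integrable_const 1)
    ((hX.const_mul (-1)).exp.aestronglyMeasurable) ?_
  filter_upwards with ω
  rw [Real.norm_of_nonneg (Real.exp_pos _).le]
  have h1 : (-1 : ℝ) * X ω ≤ 0 := by nlinarith [hX0 ω]
  calc Real.exp (-1 * X ω) ≤ Real.exp 0 := Real.exp_le_exp.mpr h1
    _ = 1 := Real.exp_zero

lemma poisson_mgf {μ : ℝ≥0} {N : Ω → ℕ} (hN : Measurable N)
    (hmap : Measure.map N P = poissonMeasure μ) :
    mgf (fun ω => (N ω : ℝ)) P (-1) = Real.exp ((μ : ℝ) * (Real.exp (-1) - 1)) := by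
  have hg : Measurable (fun n : ℕ => Real.exp (-1 * (n : ℝ))) := measurable_from_top
  have hrw : mgf (fun ω => (N ω : ℝ)) P (-1)
      = ∫ n, Real.exp (-1 * (n : ℝ)) ∂(Measure.map N P) := by
    rw [mgf, integral_map hN.aemeasurable hg.aestronglyMeasurable]
  rw [hrw, hmap]
  have hint : Integrable (fun n : ℕ => Real.exp (-1 * (n : ℝ))) (poissonMeasure μ) := by
    refine Integrable.mono' (integrable_const 1) hg.aestronglyMeasurable ?_
    filter_upwards with n
    rw [Real.norm_of_nonneg (Real.exp_pos _).le]
    have h1 : (-1 : ℝ) * (n : ℝ) ≤ 0 := by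
      have : (0 : ℝ) ≤ (n : ℝ) := Nat.cast_nonneg n
      linarith
    calc Real.exp (-1 * (n : ℝ)) ≤ Real.exp 0 := Real.exp_le_exp.mpr h1
      _ = 1 := Real.exp_zero
  rw [integral_countable' hint]
  have hsing : ∀ n : ℕ, ((poissonMeasure μ) {n}).toReal = poissonPMFReal μ n := by
    intro n
    rw [← measureReal_def, poissonMeasure_real_singleton]
    rfl
  have hterm : ∀ n : ℕ, ((poissonMeasure μ) {n}).toReal • Real.exp (-1 * (n : ℝ))
      = Real.exp (-(μ : ℝ)) * (((μ : ℝ) * Real.exp (-1)) ^ n / (n.factorial : ℝ)) := by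
    intro n
    rw [smul_eq_mul, hsing, poissonPMFReal]
    rw [show (-1 : ℝ) * (n : ℝ) = (n : ℝ) * (-1) by ring, Real.exp_nat_mul, mul_pow]
    ring
  simp only [measureReal_def]
  rw [tsum_congr hterm, tsum_mul_left,
    (NormedSpace.expSeries_div_hasSum_exp ((μ : ℝ) * Real.exp (-1))).tsum_eq,
    ← Real.exp_eq_exp_ℝ, ← Real.exp_add]
  congr 1
  ring

lemma prob_le {d : ℕ} {μ : ℝ≥0} (M : (Fin d → ℤ) → Ω → ℕ)
    (hmeas : ∀ x, Measurable (M x))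
    (hindep : iIndepFun M P)
    (hmap : ∀ x, Measure.map (M x) P = poissonMeasure μ)
    (C : Finset (Fin d → ℤ)) :
    P {ω | (∑ x ∈ C, (M x ω : ℝ)) < (μ : ℝ) * C.card / 2}
      ≤ ENNReal.ofReal (Real.exp (-(μ : ℝ) / 8)) ^ C.card := by
  classical
  set n := C.card with hn
  set X : (Fin d → ℤ) → Ω → ℝ := fun x ω => (M x ω : ℝ) with hX
  have hXm : ∀ x, Measurable (X x) := fun x => measurable_from_top.comp (hmeas x)
  have hXindep : iIndepFun X P :=
    hindep.comp (fun _ (k : ℕ) => (k : ℝ)) (fun _ => measurable_from_top)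
  have hSm : Measurable (∑ x ∈ C, X x) := by
    have hfun : (∑ x ∈ C, X x) = fun ω => ∑ x ∈ C, X x ω := by
      funext ω; rw [Finset.sum_apply]
    rw [hfun]
    exact Finset.measurable_sum _ (fun x _ => hXm x)
  have hS0 : ∀ ω, 0 ≤ (∑ x ∈ C, X x) ω := by
    intro ω
    rw [Finset.sum_apply]
    exact Finset.sum_nonneg (fun x _ => Nat.cast_nonneg _)
  have hint : Integrable (fun ω => Real.exp (-1 * (∑ x ∈ C, X x) ω)) P :=
    integrable_exp_neg hSm hS0
  have hch := measure_le_le_exp_mul_mgf (μ := P) (X := ∑ x ∈ C, X x)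
    ((μ : ℝ) * n / 2) (by norm_num : (-1 : ℝ) ≤ 0) hint
  have hmgf : mgf (∑ x ∈ C, X x) P (-1)
      = Real.exp ((μ : ℝ) * (Real.exp (-1) - 1)) ^ n := by
    rw [hXindep.mgf_sum hXm C]
    rw [Finset.prod_congr rfl (fun x _ => poisson_mgf (hmeas x) (hmap x)),
      Finset.prod_const, hn]
  rw [hmgf] at hch
  have hexp : Real.exp (-(-1) * ((μ : ℝ) * n / 2))
        * Real.exp ((μ : ℝ) * (Real.exp (-1) - 1)) ^ n
      ≤ Real.exp (-(μ : ℝ) / 8) ^ n := by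
    rw [← Real.exp_nat_mul, ← Real.exp_nat_mul, ← Real.exp_add]
    apply Real.exp_le_exp.mpr
    have he : Real.exp (-1) ≤ 3 / 8 := by
      rw [Real.exp_neg]
      have h83 : (8 / 3 : ℝ) ≤ Real.exp 1 := by nlinarith [Real.exp_one_gt_d9]
      calc (Real.exp 1)⁻¹ ≤ (8 / 3 : ℝ)⁻¹ := inv_anti₀ (by norm_num) h83
        _ = 3 / 8 := by norm_num
    have hμ0 : (0 : ℝ) ≤ (μ : ℝ) := μ.coe_nonneg
    have hn0 : (0 : ℝ) ≤ (n : ℝ) := Nat.cast_nonneg _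
    nlinarith [mul_nonneg hμ0 hn0]
  have hsub : {ω | (∑ x ∈ C, (M x ω : ℝ)) < (μ : ℝ) * C.card / 2}
      ⊆ {ω | (∑ x ∈ C, X x) ω ≤ (μ : ℝ) * n / 2} := by
    intro ω hω
    simp only [Set.mem_setOf_eq] at hω ⊢
    rw [Finset.sum_apply]
    exact le_of_lt hω
  calc P {ω | (∑ x ∈ C, (M x ω : ℝ)) < (μ : ℝ) * C.card / 2}
      ≤ P {ω | (∑ x ∈ C, X x) ω ≤ (μ : ℝ) * n / 2} := measure_mono hsub
    _ = ENNReal.ofReal ((P {ω | (∑ x ∈ C, X x) ω ≤ (μ : ℝ) * n / 2}).toReal) :=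
        (ENNReal.ofReal_toReal (measure_ne_top P _)).symm
    _ ≤ ENNReal.ofReal (Real.exp (-(μ : ℝ) / 8) ^ n) :=
        ENNReal.ofReal_le_ofReal (le_trans hch hexp)
    _ = ENNReal.ofReal (Real.exp (-(μ : ℝ) / 8)) ^ n :=
        ENNReal.ofReal_pow (Real.exp_pos _).le n

lemma iIndepFun_ae_congr {ι : Type*} {β : ι → Type*} {m : ∀ i, MeasurableSpace (β i)}
    {f g : ∀ i, Ω → β i} (hf : iIndepFun f P) (h : ∀ i, f i =ᵐ[P] g i) :
    iIndepFun g P := by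
  rw [iIndepFun_iff_measure_inter_preimage_eq_mul] at hf ⊢
  intro S sets hsets
  have h1 : ∀ i ∈ S, P (g i ⁻¹' sets i) = P (f i ⁻¹' sets i) := by
    intro i hi
    apply measure_congr
    rw [Filter.eventuallyEq_set]
    filter_upwards [h i] with ω hω
    simp only [Set.mem_preimage, hω]
  rw [Finset.prod_congr rfl h1, ← hf S hsets]
  apply measure_congr
  rw [Filter.eventuallyEq_set]
  have hall : ∀ᵐ ω ∂P, ∀ i ∈ S, f i ω = g i ω :=
    (Filter.eventually_all_finset S).mpr (fun i _ => h i)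
  filter_upwards [hall] with ω hω
  simp only [Set.mem_iInter, Set.mem_preimage]
  constructor
  · intro hm i hi
    rw [hω i hi]
    exact hm i hi
  · intro hm i hi
    rw [← hω i hi]
    exact hm i hi

end Prob

end Lattice

end PoissonDev

/-- inequality (1.3aa): there is a `μ_d < ∞` depending only on `d` such
that for every `μ > μ_d`, if `(N(x))_{x ∈ ℤ^d}` are i.i.d. Poisson(`μ`) variables, then the
sum over all finite connected `C ∋ 0` of `P{∑_{x ∈ C} N(x) < μ|C|/2}` is finite. -/
theorem summable_poisson_deviation (d : ℕ) (hd : 1 ≤ d) :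
    ∃ μd : ℝ≥0, ∀ μ : ℝ≥0, μd < μ →
      ∀ (Ω : Type) (mΩ : MeasurableSpace Ω) (P : Measure Ω), IsProbabilityMeasure P →
      ∀ N : (Fin d → ℤ) → Ω → ℕ,
        iIndepFun N P →
        (∀ x, Measure.map (N x) P = poissonMeasure μ) →
        (∑' C : {C : Finset (Fin d → ℤ) //
            (0 : Fin d → ℤ) ∈ C ∧ ConnectedIn NNAdj (C : Set (Fin d → ℤ))},
          P {ω | (∑ x ∈ C.1, (N x ω : ℝ)) < (μ : ℝ) * C.1.card / 2}) < ⊤ := by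
  classical
  refine ⟨((16 * ((PoissonDev.steps d).card + 1) : ℕ) : ℝ≥0), ?_⟩
  intro μ hμ Ω mΩ P hP N hindep hmap
  set B : ℕ := (PoissonDev.steps d).card + 1 with hB
  have hae : ∀ x, AEMeasurable (N x) P := by
    intro x
    by_contra h
    have h0 := Measure.map_of_not_aemeasurable h
    rw [hmap x] at h0
    exact (IsProbabilityMeasure.ne_zero (poissonMeasure μ)) h0
  set M : (Fin d → ℤ) → Ω → ℕ := fun x => (hae x).mk (N x) with hM
  have hMmeas : ∀ x, Measurable (M x) := fun x => (hae x).measurable_mk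
  have hMeq : ∀ x, N x =ᵐ[P] M x := fun x => (hae x).ae_eq_mk
  have hMindep : iIndepFun M P :=
    PoissonDev.iIndepFun_ae_congr hindep hMeq
  have hMmap : ∀ x, Measure.map (M x) P = poissonMeasure μ := by
    intro x
    rw [← Measure.map_congr (hMeq x), hmap x]
  set r : ℝ≥0∞ := ENNReal.ofReal (Real.exp (-(μ : ℝ) / 8)) with hr
  have hbound : ∀ C : PoissonDev.ConnSet d,
      P {ω | (∑ x ∈ C.1, (N x ω : ℝ)) < (μ : ℝ) * C.1.card / 2} ≤ r ^ C.1.card := by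
    intro C
    have hev : P {ω | (∑ x ∈ C.1, (N x ω : ℝ)) < (μ : ℝ) * C.1.card / 2}
        = P {ω | (∑ x ∈ C.1, (M x ω : ℝ)) < (μ : ℝ) * C.1.card / 2} := by
      apply measure_congr
      rw [Filter.eventuallyEq_set]
      have hall : ∀ᵐ ω ∂P, ∀ x ∈ C.1, N x ω = M x ω :=
        (Filter.eventually_all_finset C.1).mpr (fun x _ => hMeq x)
      filter_upwards [hall] with ω hω
      have hsum : (∑ x ∈ C.1, (N x ω : ℝ)) = ∑ x ∈ C.1, (M x ω : ℝ) :=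
        Finset.sum_congr rfl (fun x hx => by rw [hω x hx])
      simp only [Set.mem_setOf_eq, hsum]
    rw [hev]
    exact PoissonDev.prob_le M hMmeas hMindep hMmap C.1
  refine lt_of_le_of_lt (ENNReal.tsum_le_tsum hbound) ?_
  -- real-number smallness
  have hμR : (16 * (B : ℝ)) < (μ : ℝ) := by
    have h := (NNReal.coe_lt_coe.mpr hμ)
    rw [hB] at h ⊢
    push_cast at h ⊢
    linarith
  have hB1 : (1 : ℝ) ≤ (B : ℝ) := by
    have : 1 ≤ B := Nat.le_add_left 1 _
    exact_mod_cast this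
  have hreal : (B : ℝ) ^ 2 * Real.exp (-(μ : ℝ) / 8) < 1 := by
    have h1 : (B : ℝ) ≤ Real.exp (B : ℝ) := by
      nlinarith [Real.add_one_le_exp (B : ℝ)]
    have h2 : (B : ℝ) ^ 2 ≤ Real.exp (B : ℝ) ^ 2 :=
      pow_le_pow_left₀ (by linarith) h1 2
    have h3 : Real.exp (B : ℝ) ^ 2 = Real.exp (2 * (B : ℝ)) := by
      rw [show (2 : ℝ) * (B : ℝ) = ((2 : ℕ) : ℝ) * (B : ℝ) by norm_num,
        Real.exp_nat_mul]
    have h4 : Real.exp (-(μ : ℝ) / 8) < Real.exp (-(2 * (B : ℝ))) :=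
      Real.exp_lt_exp.mpr (by linarith)
    have h5 : (B : ℝ) ^ 2 * Real.exp (-(μ : ℝ) / 8)
        < Real.exp (2 * (B : ℝ)) * Real.exp (-(2 * (B : ℝ))) :=
      mul_lt_mul' (h2.trans h3.le) h4 (Real.exp_pos _).le (Real.exp_pos _)
    calc (B : ℝ) ^ 2 * Real.exp (-(μ : ℝ) / 8)
        < Real.exp (2 * (B : ℝ)) * Real.exp (-(2 * (B : ℝ))) := h5
      _ = 1 := by rw [← Real.exp_add]; simp
  have hq : ((B : ℝ≥0∞)) ^ 2 * r < 1 := by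
    have hrw : ((B : ℝ≥0∞)) ^ 2 * r
        = ENNReal.ofReal ((B : ℝ) ^ 2 * Real.exp (-(μ : ℝ) / 8)) := by
      rw [ENNReal.ofReal_mul (by positivity), ENNReal.ofReal_pow (by positivity),
        ENNReal.ofReal_natCast]
    rw [hrw]
    exact ENNReal.ofReal_lt_one.mpr hreal
  -- split by cardinality
  have hfib : ∀ n : ℕ,
      (∑' _C : {C : PoissonDev.ConnSet d // C.1.card = n}, r ^ n)
        ≤ ((B : ℝ≥0∞) ^ 2 * r) ^ n := by
    intro n
    haveI := PoissonDev.fiber_finite d n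
    letI : Fintype {C : PoissonDev.ConnSet d // C.1.card = n} := Fintype.ofFinite _
    rw [tsum_fintype]
    rw [Finset.sum_const, Finset.card_univ, nsmul_eq_mul]
    have hcard : (Fintype.card {C : PoissonDev.ConnSet d // C.1.card = n} : ℝ≥0∞)
        ≤ ((B : ℝ≥0∞)) ^ (2 * n) := by
      have h := PoissonDev.fiber_card_le d n
      rw [Nat.card_eq_fintype_card] at h
      calc (Fintype.card {C : PoissonDev.ConnSet d // C.1.card = n} : ℝ≥0∞)
          ≤ ((B ^ (2 * n) : ℕ) : ℝ≥0∞) := by exact_mod_cast h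
        _ = ((B : ℝ≥0∞)) ^ (2 * n) := by push_cast; ring
    calc (Fintype.card {C : PoissonDev.ConnSet d // C.1.card = n} : ℝ≥0∞) * r ^ n
        ≤ ((B : ℝ≥0∞)) ^ (2 * n) * r ^ n :=
          mul_le_mul_left hcard _
      _ = ((B : ℝ≥0∞) ^ 2 * r) ^ n := by
          rw [mul_pow, pow_mul]
  calc (∑' C : PoissonDev.ConnSet d, r ^ C.1.card)
      = ∑' p : (Σ n : ℕ, {C : PoissonDev.ConnSet d // C.1.card = n}),
          r ^ ((Equiv.sigmaFiberEquiv (fun C : PoissonDev.ConnSet d => C.1.card)) p).1.card :=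
        ((Equiv.sigmaFiberEquiv (fun C : PoissonDev.ConnSet d => C.1.card)).tsum_eq
          (fun C => r ^ C.1.card)).symm
    _ = ∑' p : (Σ n : ℕ, {C : PoissonDev.ConnSet d // C.1.card = n}), r ^ p.1 := by
        apply tsum_congr
        intro p
        congr 1
        exact p.2.2
    _ = ∑' (n : ℕ), ∑' (_C : {C : PoissonDev.ConnSet d // C.1.card = n}), r ^ n :=
        ENNReal.tsum_sigma (fun n _ => r ^ n)
    _ ≤ ∑' (n : ℕ), ((B : ℝ≥0∞) ^ 2 * r) ^ n := ENNReal.tsum_le_tsum hfib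
    _ = (1 - (B : ℝ≥0∞) ^ 2 * r)⁻¹ := ENNReal.tsum_geometric _
    _ < ⊤ := ENNReal.inv_lt_top.mpr (tsub_pos_iff_lt.mpr hq)
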